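/- Let a, ã, β₀ : Fin p → ℝ, W_j = |a_j| − |ã_j|, S₀ = {j : β₀_j ≠ 0}, s₀ = |S₀|, and assume: (i) the ℓ1-error bound Σ_{j=1}^p (|a_j − β₀_j| + |ã_j|) ≤ C_{ℓ1} λ s₀; (ii) min_{j ∈ S₀} |β₀_j| ≥ κλ/C_λ; (iii) a_j ≠ 0 implies W_j ≠ 0 for every j; (iv) #{j : W_j < 0} ≤ φ C_{ℓ1} C_λ κ⁻¹ s₀, where φ = (1+√5)/2 is the golden ratio; with λ, κ, C_λ, C_{ℓ1} > 0. Then, with Ŝ₀ = {j : W_j > 0}, one has #(Ŝ₀ ∩ S₀) ≥ (1 − C_{ℓ1} C_λ (φ + 1) κ⁻¹) · s₀. -/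

import Mathlib

open Finset

/-- Case 2 of the power analysis: under the ℓ1-error bound, the
signal-strength condition, the no-ties condition `a j ≠ 0 → W j ≠ 0`, and the bound
`#{j : W j < 0} ≤ φ C_{ℓ1} C_λ κ⁻¹ s₀` with `φ = (1+√5)/2` the golden ratio, the
selected set `Ŝ₀ = {j : W j > 0}` satisfies
`#(Ŝ₀ ∩ S₀) ≥ (1 - C_{ℓ1} C_λ (φ+1) κ⁻¹) s₀`. -/
theorem power_case2_lower_bound
    {p : ℕ} (hp : 1 ≤ p) (a atk β₀ : Fin p → ℝ)
    (W : Fin p → ℝ) (hW : ∀ j, W j = |a j| - |atk j|)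
    (S₀ : Finset (Fin p)) (hS₀ : S₀ = univ.filter fun j : Fin p => β₀ j ≠ 0)
    (s₀ : ℝ) (hs₀ : s₀ = (S₀.card : ℝ))
    (lam κ Clam Cl1 : ℝ) (hlam : 0 < lam) (hκ : 0 < κ)
    (hClam : 0 < Clam) (hCl1 : 0 < Cl1)
    (hl1 : ∑ j, (|a j - β₀ j| + |atk j|) ≤ Cl1 * lam * s₀)
    (hsignal : ∀ j ∈ S₀, κ * lam / Clam ≤ |β₀ j|)
    (hsupp : ∀ j : Fin p, a j ≠ 0 → W j ≠ 0)
    (hneg : ((univ.filter fun j : Fin p => W j < 0).card : ℝ) ≤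
      ((1 + Real.sqrt 5) / 2) * Cl1 * Clam * κ⁻¹ * s₀)
    (Shat : Finset (Fin p))
    (hShat : Shat = univ.filter fun j : Fin p => 0 < W j) :
    (1 - Cl1 * Clam * ((1 + Real.sqrt 5) / 2 + 1) * κ⁻¹) * s₀ ≤
      ((Shat ∩ S₀).card : ℝ) := by
  set φ : ℝ := (1 + Real.sqrt 5) / 2 with hφ
  -- missed signals
  set T : Finset (Fin p) := S₀ \ Shat with hT
  set T₁ : Finset (Fin p) := T.filter (fun j => W j < 0) with hT₁
  set T₂ : Finset (Fin p) := T.filter (fun j => W j = 0) with hT₂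
  have hTsplit : T ⊆ T₁ ∪ T₂ := by
    intro j hj
    have hjS : j ∈ S₀ := (mem_sdiff.mp hj).1
    have hjn : j ∉ Shat := (mem_sdiff.mp hj).2
    have hWle : ¬ (0 < W j) := by
      intro h
      exact hjn (by rw [hShat]; exact mem_filter.mpr ⟨mem_univ j, h⟩)
    rcases lt_or_eq_of_le (not_lt.mp hWle) with h | h
    · exact mem_union.mpr (Or.inl (mem_filter.mpr ⟨hj, h⟩))
    · exact mem_union.mpr (Or.inr (mem_filter.mpr ⟨hj, h⟩))
  -- bound on T₁
  have hT₁b : ((T₁.card : ℝ)) ≤ φ * Cl1 * Clam * κ⁻¹ * s₀ := by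
    refine le_trans ?_ hneg
    exact_mod_cast card_le_card (fun j hj =>
      mem_filter.mpr ⟨mem_univ j, (mem_filter.mp hj).2⟩)
  -- bound on T₂
  have hT₂b : ((T₂.card : ℝ)) ≤ Cl1 * Clam * κ⁻¹ * s₀ := by
    have key : (T₂.card : ℝ) * (κ * lam / Clam) ≤ Cl1 * lam * s₀ := by
      have h1 : (T₂.card : ℝ) * (κ * lam / Clam) ≤ ∑ j ∈ T₂, (|a j - β₀ j| + |atk j|) := by
        rw [mul_comm]
        refine le_trans ?_ (Finset.sum_le_sum (f := fun _ => κ * lam / Clam) ?_)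
        · simp [mul_comm]
        · intro j hj
          have hjT₂ := mem_filter.mp hj
          have hjS : j ∈ S₀ := (mem_sdiff.mp hjT₂.1).1
          have ha : a j = 0 := by
            by_contra h
            exact hsupp j h hjT₂.2
          have := hsignal j hjS
          have habs : |β₀ j| ≤ |a j - β₀ j| + |atk j| := by
            rw [ha]
            simp only [zero_sub, abs_neg]; exact le_add_of_nonneg_right (abs_nonneg (atk j))
          linarith
      refine le_trans h1 (le_trans ?_ hl1)
      exact Finset.sum_le_sum_of_subset_of_nonneg (subset_univ T₂)
        (fun j _ _ => by positivity)
    have hpos : 0 < κ * lam / Clam := by positivity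
    rw [← le_div_iff₀ hpos] at key
    calc (T₂.card : ℝ) ≤ Cl1 * lam * s₀ / (κ * lam / Clam) := key
      _ = Cl1 * Clam * κ⁻¹ * s₀ := by
          field_simp
  have hTb : ((T.card : ℝ)) ≤ Cl1 * Clam * (φ + 1) * κ⁻¹ * s₀ := by
    have h := card_le_card hTsplit
    have h2 : T.card ≤ T₁.card + T₂.card := le_trans h (card_union_le _ _)
    have : ((T.card : ℝ)) ≤ (T₁.card : ℝ) + (T₂.card : ℝ) := by exact_mod_cast h2
    nlinarith
  have hcard : ((Shat ∩ S₀).card : ℝ) = s₀ - (T.card : ℝ) := by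
    have : (S₀ ∩ Shat).card + (S₀ \ Shat).card = S₀.card := by
      exact card_inter_add_card_sdiff S₀ Shat
    rw [inter_comm] at this
    rw [hs₀, hT]
    push_cast [← this]
    ring
  rw [hcard]
  linarith
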